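/- Let d ≥ 1 be an integer, let α, b > 0 be real numbers, let x ∈ ℝ^d with x ≠ 0, and let u : ℝ^d → ℂ be differentiable at x with u(x) ≠ 0. Define N(u)(y) := ‖y‖^{-b} |u(y)|^α u(y) and the momentum bracket {f,g}_p := Re( f ∇\overline{g} − g ∇\overline{f} ). Then, pointwise at x, {N(u), u}_p = −(α/(α+2)) ∇( ‖·‖^{-b} |u|^{α+2} )(x) − (2/(α+2)) ∇(‖·‖^{-b})(x) |u(x)|^{α+2}. -/

import Mathlib

theorem stmt_10 (d : ℕ) (hd : 1 ≤ d) (α b : ℝ) (hα : 0 < α) (hb : 0 < b)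
    (x : EuclideanSpace ℝ (Fin d)) (hx : x ≠ 0)
    (u : EuclideanSpace ℝ (Fin d) → ℂ) (hu : DifferentiableAt ℝ u x) (hux : u x ≠ 0)
    (N : EuclideanSpace ℝ (Fin d) → ℂ)
    (hN : N = fun y => ((‖y‖ ^ (-b) * ‖u y‖ ^ α : ℝ) : ℂ) * u y) :
    ∀ j : Fin d,
      (N x * (starRingEnd ℂ) (fderiv ℝ u x (EuclideanSpace.single j 1))
          - u x * fderiv ℝ (fun y => (starRingEnd ℂ) (N y)) x (EuclideanSpace.single j 1)).re
        = -(α / (α + 2)) *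
            fderiv ℝ (fun y => ‖y‖ ^ (-b) * ‖u y‖ ^ (α + 2)) x
              (EuclideanSpace.single j 1)
          - (2 / (α + 2)) *
              fderiv ℝ (fun y : EuclideanSpace ℝ (Fin d) => ‖y‖ ^ (-b)) x
                (EuclideanSpace.single j 1) * ‖u x‖ ^ (α + 2) := by
  subst hN
  intro j
  set w : EuclideanSpace ℝ (Fin d) := EuclideanSpace.single j 1 with hw
  have hxn : ‖x‖ ≠ 0 := norm_ne_zero_iff.mpr hx
  have hm0 : (0:ℝ) < ‖u x‖ := norm_pos_iff.mpr hux
  set m : ℝ := ‖u x‖ with hmdef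
  -- norm function differentiability
  have hnd : DifferentiableAt ℝ (fun y : EuclideanSpace ℝ (Fin d) => ‖y‖) x := differentiableAt_id.norm ℝ hx
  have hMd : DifferentiableAt ℝ (fun y : EuclideanSpace ℝ (Fin d) => ‖u y‖) x := hu.norm ℝ hux
  set nD := fderiv ℝ (fun y : EuclideanSpace ℝ (Fin d) => ‖y‖) x with hnD
  set MD := fderiv ℝ (fun y : EuclideanSpace ℝ (Fin d) => ‖u y‖) x with hMD
  set uD := fderiv ℝ u x with huD
  -- derivative of F = ‖·‖^(-b)
  have hF : HasFDerivAt (fun y : EuclideanSpace ℝ (Fin d) => ‖y‖ ^ (-b)) ((-b * ‖x‖ ^ (-b - 1)) • nD) x := by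
    have := (Real.hasDerivAt_rpow_const (p := -b) (Or.inl hxn)).comp_hasFDerivAt x
      hnd.hasFDerivAt
    simpa [Function.comp_def] using this
  -- derivative of ‖u ·‖ ^ p
  have hMp : ∀ p : ℝ, HasFDerivAt (fun y : EuclideanSpace ℝ (Fin d) => ‖u y‖ ^ p) ((p * m ^ (p - 1)) • MD) x := by
    intro p
    have := (Real.hasDerivAt_rpow_const (p := p) (Or.inl hm0.ne')).comp_hasFDerivAt x
      hMd.hasFDerivAt
    simpa [Function.comp_def] using this
  -- derivative of products
  have hprod : ∀ p : ℝ, HasFDerivAt (fun y : EuclideanSpace ℝ (Fin d) => ‖y‖ ^ (-b) * ‖u y‖ ^ p)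
      ((‖x‖ ^ (-b)) • ((p * m ^ (p - 1)) • MD) + (m ^ p) • ((-b * ‖x‖ ^ (-b - 1)) • nD)) x :=
    fun p => hF.mul (hMp p)
  -- derivative of conj N
  have hGc : HasFDerivAt (fun y : EuclideanSpace ℝ (Fin d) => ((‖y‖ ^ (-b) * ‖u y‖ ^ α : ℝ) : ℂ))
      (Complex.ofRealCLM.comp
        ((‖x‖ ^ (-b)) • ((α * m ^ (α - 1)) • MD) + (m ^ α) • ((-b * ‖x‖ ^ (-b - 1)) • nD))) x := by
    have := Complex.ofRealCLM.hasFDerivAt.comp x (hprod α)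
    simpa [Function.comp_def] using this
  have hcu : HasFDerivAt (fun y : EuclideanSpace ℝ (Fin d) => (starRingEnd ℂ) (u y))
      (Complex.conjCLE.toContinuousLinearMap.comp uD) x := by
    have := Complex.conjCLE.toContinuousLinearMap.hasFDerivAt.comp x hu.hasFDerivAt
    simpa [Function.comp_def, Complex.conjCLE_apply] using this
  have hfuneq : (fun y : EuclideanSpace ℝ (Fin d) => (starRingEnd ℂ) (((‖y‖ ^ (-b) * ‖u y‖ ^ α : ℝ) : ℂ) * u y))
      = fun y : EuclideanSpace ℝ (Fin d) => ((‖y‖ ^ (-b) * ‖u y‖ ^ α : ℝ) : ℂ) * (starRingEnd ℂ) (u y) := by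
    funext y
    simp [map_mul, Complex.conj_ofReal]
  have hconjN : HasFDerivAt (fun y : EuclideanSpace ℝ (Fin d) => ((‖y‖ ^ (-b) * ‖u y‖ ^ α : ℝ) : ℂ) * (starRingEnd ℂ) (u y)) _ x := hGc.mul hcu
  -- rewrite goal
  rw [hfuneq, hconjN.fderiv, (hprod (α + 2)).fderiv, hF.fderiv]
  simp only [ContinuousLinearMap.add_apply, ContinuousLinearMap.smul_apply,
    ContinuousLinearMap.comp_apply, smul_eq_mul, Complex.ofRealCLM_apply,
    ContinuousLinearEquiv.coe_coe, Complex.conjCLE_apply, Complex.real_smul]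
  simp only [← hmdef]
  set a : ℝ := -b * ‖x‖ ^ (-b - 1) * nD w with ha
  set c : ℝ := MD w with hc
  set v : ℂ := uD w with hv
  set g : ℝ := ‖x‖ ^ (-b) * (α * m ^ (α - 1) * c) + m ^ α * a with hg
  -- reduce LHS to real
  have hre : (((‖x‖ ^ (-b) * m ^ α : ℝ) : ℂ) * u x * (starRingEnd ℂ) v
      - u x * (((‖x‖ ^ (-b) * m ^ α : ℝ) : ℂ) * (starRingEnd ℂ) v
          + (starRingEnd ℂ) (u x) * (g : ℂ))).re = -(m ^ 2 * g) := by
    have h1 : ((‖x‖ ^ (-b) * m ^ α : ℝ) : ℂ) * u x * (starRingEnd ℂ) v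
        - u x * (((‖x‖ ^ (-b) * m ^ α : ℝ) : ℂ) * (starRingEnd ℂ) v
            + (starRingEnd ℂ) (u x) * (g : ℂ))
        = ((-(m ^ 2 * g) : ℝ) : ℂ) := by
      have h2 : u x * (starRingEnd ℂ) (u x) = ((m ^ 2 : ℝ) : ℂ) := by
        rw [Complex.mul_conj, Complex.normSq_eq_norm_sq]
      push_cast
      push_cast at h2
      linear_combination (-(g : ℂ)) * h2
    rw [h1, Complex.ofReal_re]
  rw [hre]
  -- now a pure real identity
  have R1 : m ^ (α + 2) = m ^ α * m ^ 2 := by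
    rw [Real.rpow_add hm0, Real.rpow_two]
  have R2 : m ^ (α + 2 - 1) = m ^ (α - 1) * m ^ 2 := by
    rw [show α + 2 - 1 = α - 1 + 2 by ring, Real.rpow_add hm0, Real.rpow_two]
  have hα2 : α + 2 ≠ 0 := by positivity
  rw [hg, R1, R2]
  field_simp
  ring
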